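/- Let [k_0,…,k_m] and [k'_0,…,k'_n] be continued fractions with k_0, k'_0 ≥ 0, intermediate partial quotients ≥ 1, and last partial quotients ≥ 2 (when m, n ≥ 1 respectively). If there is an index i with k_j = k'_j for j < i, and k_i < k'_i when i is even or k_i > k'_i when i is odd, then [k_0,…,k_m] < [k'_0,…,k'_n] as rational numbers. That is, the alternating lexicographic ordering of partial-quotient sequences agrees with the ordering of the rational values. -/

import Mathlib

open List

/-- `r`-value of an LR-string (`true` = R, `false` = L):
`r(ε) = 1`, `r(SL) = r(S) - 2^(-|SL|)`, `r(SR) = r(S) + 2^(-|SR|)`. -/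
def rval (S : List Bool) : ℚ :=
  1 + ∑ i ∈ Finset.range S.length,
      (if S.getD i false then ((2:ℚ)^(i+1))⁻¹ else -((2:ℚ)^(i+1))⁻¹)

/-- Generalized strings: LR-strings plus the formal symbols `R⁻¹ = inv true`
and `L⁻¹ = inv false`. -/
inductive Gen where
  | inv : Bool → Gen
  | str : List Bool → Gen
deriving DecidableEq

/-- Left parent: `P_L(ε) = R⁻¹`, `P_L(SL) = P_L(S)`, `P_L(SR) = S`. -/
def PL (S : List Bool) : Gen :=
  match S.reverse.dropWhile (· = false) with
  | [] => Gen.inv true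
  | _ :: t => Gen.str t.reverse

/-- Right parent: `P_R(ε) = L⁻¹`, `P_R(SL) = S`, `P_R(SR) = P_R(S)`. -/
def PR (S : List Bool) : Gen :=
  match S.reverse.dropWhile (· = true) with
  | [] => Gen.inv false
  | _ :: t => Gen.str t.reverse

/-- Extension of `r` to generalized strings: `r(R⁻¹) = 0`, `r(L⁻¹) = 2`. -/
def rg : Gen → ℚ
  | Gen.inv true => 0
  | Gen.inv false => 2
  | Gen.str S => rval S

/-- Length of a generalized string; the formal symbols have length `-1`. -/
def glen : Gen → ℤ
  | Gen.inv _ => -1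
  | Gen.str S => S.length

/-- Position function: `N(ε) = 0`, `N(SL) = 2N(S)+1`, `N(SR) = 2N(S)+2`. -/
def posN (S : List Bool) : ℕ :=
  ∑ i ∈ Finset.range S.length, (if S.getD i false then 2 else 1) * 2^(S.length - 1 - i)

/-- The alternating-block string `S(k₀,…,k_m) = R^{k₀} L^{k₁} R^{k₂} ⋯`. -/
def blockStr (ks : List ℕ) : List Bool :=
  (ks.zipIdx.map (fun p => List.replicate p.1 (decide (p.2 % 2 = 0)))).flatten

/-- Continued fraction `[q₀,…,q_m]`. -/
def cf : List ℚ → ℚ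
  | [] => 0
  | [q] => q
  | q :: qs => q + (cf qs)⁻¹

/-- Admissible continued-fraction index sequences: `[q₀]` with `q₀ ≥ 1`, or
`[q₀,…,q_m]` with `m ≥ 1`, intermediate `qᵢ ≥ 1`, and `q_m ≥ 2`. -/
def CFAdmissible (qs : List ℕ) : Prop :=
  qs ≠ [] ∧ (qs.length = 1 → 1 ≤ qs.getD 0 0) ∧
    (∀ i, 1 ≤ i → i + 1 < qs.length → 1 ≤ qs.getD i 0) ∧
    (2 ≤ qs.length → 2 ≤ qs.getLastD 0)

/-- The map `f([q₀,…,q_m]) = S(q₀,…,q_{m-1},q_m - 1)`. -/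
def cfToStr (qs : List ℕ) : List Bool :=
  blockStr (qs.dropLast ++ [qs.getLastD 0 - 1])

lemma cf_cons (q x : ℚ) (xs : List ℚ) :
    cf (q :: x :: xs) = q + (cf (x :: xs))⁻¹ := rfl

lemma getLastD_cons_ne (a : ℕ) (t : List ℕ) (h : t ≠ []) :
    (a :: t).getLastD 0 = t.getLastD 0 := by
  cases t with
  | nil => exact absurd rfl h
  | cons x xs => simp [List.getLastD_cons]

lemma one_lt_cf (t : List ℕ)
    (hmid : ∀ j, j + 1 < t.length → 1 ≤ t.getD j 0)
    (hlast : 2 ≤ t.getLastD 0) :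
    1 < cf (t.map (fun q => (q : ℚ))) := by
  induction t with
  | nil => simp at hlast
  | cons a t ih =>
    cases t with
    | nil =>
      simp only [List.getLastD] at hlast
      have : (1:ℚ) < (a:ℚ) := by exact_mod_cast hlast
      simpa [cf] using this
    | cons x xs =>
      have h1 : 1 < cf ((x :: xs).map (fun q => (q : ℚ))) := by
        apply ih
        · intro j hj
          have := hmid (j+1) (by simpa using Nat.succ_lt_succ hj)
          simpa using this
        · have := getLastD_cons_ne a (x :: xs) (by simp)
          omega
      have ha : 1 ≤ a := by
        have := hmid 0 (by simp)
        simpa using this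
      have ha' : (1:ℚ) ≤ (a:ℚ) := by exact_mod_cast ha
      have hpos : (0:ℚ) < (cf ((x :: xs).map (fun q => (q : ℚ))))⁻¹ := by
        positivity
      calc (1:ℚ) < a + (cf ((x :: xs).map (fun q => (q : ℚ))))⁻¹ := by linarith
        _ = cf (((a : ℕ) :: x :: xs).map (fun q => (q : ℚ))) := by
              simp [cf_cons]

/-- The alternating lexicographic ordering of partial-quotient sequences agrees
with the ordering of the rational values of continued fractions: if `kⱼ = k'ⱼ`
for `j < i` and `kᵢ < k'ᵢ` with `i` even, or `kᵢ > k'ᵢ` with `i` odd, then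
`[k₀,…,k_m] < [k'₀,…,k'_n]`. -/
theorem stmt16 (ks ks' : List ℕ) (hne : ks ≠ []) (hne' : ks' ≠ [])
    (hmid : ∀ i, 1 ≤ i → i + 1 < ks.length → 1 ≤ ks.getD i 0)
    (hmid' : ∀ i, 1 ≤ i → i + 1 < ks'.length → 1 ≤ ks'.getD i 0)
    (hlast : 2 ≤ ks.length → 2 ≤ ks.getLastD 0)
    (hlast' : 2 ≤ ks'.length → 2 ≤ ks'.getLastD 0)
    (i : ℕ) (hi : i < ks.length) (hi' : i < ks'.length)
    (hpre : ∀ j < i, ks.getD j 0 = ks'.getD j 0)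
    (hdiff : (Even i ∧ ks.getD i 0 < ks'.getD i 0) ∨
      (Odd i ∧ ks'.getD i 0 < ks.getD i 0)) :
    cf (ks.map (fun q => (q : ℚ))) < cf (ks'.map (fun q => (q : ℚ))) := by
  induction i generalizing ks ks' with
  | zero =>
    rcases hdiff with ⟨_, hd⟩ | ⟨ho, _⟩
    · cases ks with
      | nil => exact absurd rfl hne
      | cons a t =>
        cases ks' with
        | nil => exact absurd rfl hne'
        | cons b t' =>
          simp only [List.getD_cons_zero] at hd
          have hab : (a:ℚ) + 1 ≤ (b:ℚ) := by exact_mod_cast hd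
          have hL : cf (((a:ℕ) :: t).map (fun q => (q : ℚ))) < (a:ℚ) + 1 := by
            cases t with
            | nil => simp [cf]
            | cons x xs =>
              have h1 : 1 < cf ((x :: xs).map (fun q => (q : ℚ))) := by
                apply one_lt_cf
                · intro j hj
                  have := hmid (j+1) (by omega) (by simpa using Nat.succ_lt_succ hj)
                  simpa using this
                · have h2 := hlast (by simp)
                  have := getLastD_cons_ne a (x :: xs) (by simp)
                  omega
              have hinv : (cf ((x :: xs).map (fun q => (q : ℚ))))⁻¹ < 1 := by
                rw [inv_lt_one₀ (by linarith)]; exact h1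
              have e : cf (((a:ℕ) :: x :: xs).map (fun q => (q : ℚ)))
                  = (a:ℚ) + (cf ((x :: xs).map (fun q => (q : ℚ))))⁻¹ := rfl
              rw [e]
              linarith
          have hR : (b:ℚ) ≤ cf (((b:ℕ) :: t').map (fun q => (q : ℚ))) := by
            cases t' with
            | nil => simp [cf]
            | cons x xs =>
              have h1 : 1 < cf ((x :: xs).map (fun q => (q : ℚ))) := by
                apply one_lt_cf
                · intro j hj
                  have := hmid' (j+1) (by omega) (by simpa using Nat.succ_lt_succ hj)
                  simpa using this
                · have h2 := hlast' (by simp)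
                  have := getLastD_cons_ne b (x :: xs) (by simp)
                  omega
              have hinv : (0:ℚ) < (cf ((x :: xs).map (fun q => (q : ℚ))))⁻¹ := by
                positivity
              have e : cf (((b:ℕ) :: x :: xs).map (fun q => (q : ℚ)))
                  = (b:ℚ) + (cf ((x :: xs).map (fun q => (q : ℚ))))⁻¹ := rfl
              rw [e]
              linarith
          linarith
    · exact absurd ho (by simp)
  | succ n IH =>
    cases ks with
    | nil => exact absurd rfl hne
    | cons a t =>
      cases ks' with
      | nil => exact absurd rfl hne'
      | cons b t' =>
        have hab : a = b := by
          have := hpre 0 (Nat.succ_pos n)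
          simpa using this
        subst hab
        have htne : t ≠ [] := by
          intro h; subst h; simp at hi
        have htne' : t' ≠ [] := by
          intro h; subst h; simp at hi'
        have hmidt : ∀ j, j + 1 < t.length → 1 ≤ t.getD j 0 := by
          intro j hj
          have := hmid (j+1) (by omega) (by simpa using Nat.succ_lt_succ hj)
          simpa using this
        have hmidt' : ∀ j, j + 1 < t'.length → 1 ≤ t'.getD j 0 := by
          intro j hj
          have := hmid' (j+1) (by omega) (by simpa using Nat.succ_lt_succ hj)
          simpa using this
        have hlastt : 2 ≤ t.getLastD 0 := by
          have h2 := hlast (by cases t with | nil => exact absurd rfl htne | cons x xs => simp)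
          have := getLastD_cons_ne a t htne
          omega
        have hlastt' : 2 ≤ t'.getLastD 0 := by
          have h2 := hlast' (by cases t' with | nil => exact absurd rfl htne' | cons x xs => simp)
          have := getLastD_cons_ne a t' htne'
          omega
        -- apply IH with swapped lists
        have hkey : cf (t'.map (fun q => (q : ℚ))) < cf (t.map (fun q => (q : ℚ))) := by
          apply IH t' t htne' htne
          · intro j h1 h2; exact hmidt' j h2
          · intro j h1 h2; exact hmidt j h2
          · intro _; exact hlastt'
          · intro _; exact hlastt
          · simpa using hi'
          · simpa using hi
          · intro j hj
            have := hpre (j+1) (by omega)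
            simpa using this.symm
          · rcases hdiff with ⟨he, hd⟩ | ⟨ho, hd⟩
            · right
              refine ⟨by rwa [Nat.even_add_one, Nat.not_even_iff_odd] at he, ?_⟩
              simpa using hd
            · left
              refine ⟨by rwa [Nat.odd_add_one, Nat.not_odd_iff_even] at ho, ?_⟩
              simpa using hd
        have h1 : 1 < cf (t.map (fun q => (q : ℚ))) := one_lt_cf t hmidt hlastt
        have h1' : 1 < cf (t'.map (fun q => (q : ℚ))) := one_lt_cf t' hmidt' hlastt'
        have hinv : (cf (t.map (fun q => (q : ℚ))))⁻¹ < (cf (t'.map (fun q => (q : ℚ))))⁻¹ := by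
          apply inv_strictAnti₀ (by linarith) hkey
        cases t with
        | nil => exact absurd rfl htne
        | cons x xs =>
          cases t' with
          | nil => exact absurd rfl htne'
          | cons y ys =>
            have e1 : cf (((a:ℕ) :: x :: xs).map (fun q => (q : ℚ)))
                = (a:ℚ) + (cf ((x :: xs).map (fun q => (q : ℚ))))⁻¹ := rfl
            have e2 : cf (((a:ℕ) :: y :: ys).map (fun q => (q : ℚ)))
                = (a:ℚ) + (cf ((y :: ys).map (fun q => (q : ℚ))))⁻¹ := rfl
            rw [e1, e2]
            linarith
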